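/- (Rasiowa–Sikorski for Boolean algebras) Let A be a Boolean algebra, a ∈ A with a ≠ ⊥, and let (Y_n)_{n ∈ ℕ} be countably many subsets of A, each of which has ⊥ as its only lower bound. Then there exists an ultrafilter F of A such that a ∈ F and for every n there is y ∈ Y_n with y ∉ F. -/
import Mathlib


/-- An ultrafilter on a Boolean algebra. -/
structure BAUltrafilter (A : Type*) [BooleanAlgebra A] where
  carrier : Set A
  top_mem : ⊤ ∈ carrier
  bot_not_mem : ⊥ ∉ carrier
  inf_mem : ∀ a b : A, a ∈ carrier → b ∈ carrier → a ⊓ b ∈ carrier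
  mem_of_le : ∀ a b : A, a ∈ carrier → a ≤ b → b ∈ carrier
  ultra : ∀ a : A, a ∈ carrier ∨ aᶜ ∈ carrier

/-- Proper filter predicate. -/
def IsPF {A : Type*} [BooleanAlgebra A] (S : Set A) : Prop :=
  ⊤ ∈ S ∧ ⊥ ∉ S ∧ (∀ a b : A, a ∈ S → b ∈ S → a ⊓ b ∈ S) ∧
    (∀ a b : A, a ∈ S → a ≤ b → b ∈ S)

/-- Every proper filter extends to an ultrafilter. -/
theorem exists_ultra {A : Type*} [BooleanAlgebra A] (S : Set A) (hS : IsPF S) :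
    ∃ F : BAUltrafilter A, S ⊆ F.carrier := by
  obtain ⟨M, hSM, hM, hmax⟩ := zorn_subset_nonempty {T : Set A | IsPF T}
    (fun c hc hchain hne => by
      refine ⟨⋃₀ c, ⟨?_, ?_, ?_, ?_⟩, fun s hs => Set.subset_sUnion_of_mem hs⟩
      · obtain ⟨t, ht⟩ := hne
        exact ⟨t, ht, (hc ht).1⟩
      · rintro ⟨t, ht, hbot⟩
        exact (hc ht).2.1 hbot
      · rintro x y ⟨t, ht, hx⟩ ⟨u, hu, hy⟩
        rcases hchain.total ht hu with h | h
        · exact ⟨u, hu, (hc hu).2.2.1 _ _ (h hx) hy⟩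
        · exact ⟨t, ht, (hc ht).2.2.1 _ _ hx (h hy)⟩
      · rintro x y ⟨t, ht, hx⟩ hxy
        exact ⟨t, ht, (hc ht).2.2.2 _ _ hx hxy⟩) S hS
  obtain ⟨htop, hbot, hinf, hup⟩ := hM
  have ultra : ∀ x : A, x ∈ M ∨ xᶜ ∈ M := by
    intro x
    by_contra h
    push_neg at h
    obtain ⟨hx, hxc⟩ := h
    -- the filter generated by M and x
    set M' : Set A := {c : A | ∃ m ∈ M, m ⊓ x ≤ c} with hM'
    have hMM' : M ⊆ M' := fun m hm => ⟨m, hm, inf_le_left⟩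
    have hxM' : x ∈ M' := ⟨⊤, htop, inf_le_right⟩
    have hPF : IsPF M' := by
      refine ⟨hMM' htop, ?_, ?_, ?_⟩
      · rintro ⟨m, hm, hle⟩
        have : m ⊓ x = ⊥ := le_bot_iff.mp hle
        have : m ≤ xᶜ := by
          rwa [le_compl_iff_disjoint_right, disjoint_iff]
        exact hxc (hup _ _ hm this)
      · rintro c d ⟨m, hm, hmc⟩ ⟨k, hk, hkd⟩
        refine ⟨m ⊓ k, hinf _ _ hm hk, ?_⟩
        refine le_inf ?_ ?_
        · exact le_trans (inf_le_inf_right _ inf_le_left) hmc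
        · exact le_trans (inf_le_inf_right _ inf_le_right) hkd
      · rintro c d ⟨m, hm, hmc⟩ hcd
        exact ⟨m, hm, hmc.trans hcd⟩
    exact hx (hmax hPF hMM' hxM')
  exact ⟨⟨M, htop, hbot, hinf, hup, ultra⟩, hSM⟩

/-- The Rasiowa–Sikorski decreasing sequence. -/
def RSseq {A : Type*} [BooleanAlgebra A] (a : A) (f : ℕ → A → A) : ℕ → A
  | 0 => a
  | n + 1 => RSseq a f n ⊓ (f n (RSseq a f n))ᶜ

theorem stmt8 {A : Type*} [BooleanAlgebra A] (a : A) (ha : a ≠ ⊥)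
    (Y : ℕ → Set A) (hY : ∀ n, ∀ b : A, (∀ y ∈ Y n, b ≤ y) → b = ⊥) :
    ∃ F : BAUltrafilter A, a ∈ F.carrier ∧
      ∀ n : ℕ, ∃ y ∈ Y n, y ∉ F.carrier := by
  have step : ∀ n, ∀ b : A, ∃ y, b ≠ ⊥ → y ∈ Y n ∧ b ⊓ yᶜ ≠ ⊥ := by
    intro n b
    by_cases hb : b = ⊥
    · exact ⟨⊤, fun h => absurd hb h⟩
    · by_contra h
      push_neg at h
      refine hb (hY n b fun y hy => ?_)
      have h' := (h y).2 hy
      rwa [← sdiff_eq, sdiff_eq_bot_iff] at h'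
  choose y hy using step
  set g : ℕ → A := RSseq a y with hg
  have gne : ∀ n, g n ≠ ⊥ := by
    intro n
    induction n with
    | zero => exact ha
    | succ k ih => exact (hy k (g k) ih).2
  have gsucc : ∀ n, g (n + 1) = g n ⊓ (y n (g n))ᶜ := fun n => rfl
  have gmono : ∀ m n, m ≤ n → g n ≤ g m := by
    intro m n h
    induction n with
    | zero => obtain rfl := Nat.le_zero.mp h; exact le_rfl
    | succ k ih =>
      rcases Nat.lt_or_ge m (k + 1) with h' | h'
      · exact le_trans (le_trans (le_of_eq (gsucc k)) inf_le_left)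
          (ih (Nat.lt_succ_iff.mp h'))
      · have : m = k + 1 := le_antisymm h h'
        exact this ▸ le_rfl
  set F0 : Set A := {c : A | ∃ n, g n ≤ c} with hF0
  have hPF : IsPF F0 := by
    refine ⟨⟨0, le_top⟩, ?_, ?_, ?_⟩
    · rintro ⟨n, hn⟩
      exact gne n (le_bot_iff.mp hn)
    · rintro c d ⟨n, hn⟩ ⟨m, hm⟩
      exact ⟨max n m, le_inf ((gmono n _ (le_max_left n m)).trans hn)
        ((gmono m _ (le_max_right n m)).trans hm)⟩
    · rintro c d ⟨n, hn⟩ hcd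
      exact ⟨n, hn.trans hcd⟩
  obtain ⟨F, hF⟩ := exists_ultra F0 hPF
  refine ⟨F, hF ⟨0, le_refl a⟩, fun n => ?_⟩
  refine ⟨y n (g n), (hy n (g n) (gne n)).1, fun hmem => ?_⟩
  have hc : (y n (g n))ᶜ ∈ F.carrier :=
    hF ⟨n + 1, le_trans (le_of_eq (gsucc n)) inf_le_right⟩
  have := F.inf_mem _ _ hmem hc
  rw [inf_compl_eq_bot] at this
  exact F.bot_not_mem this
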